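/- Let 0 < L < γ and λ ∈ (0,1). Set r = √((γ/L)² − 1) and T = (1/(L·r))·arctan( r(1−λ) / ( 2·(λ/(1+λ))·(γ/L − 1) + 1 + λ ) ). Suppose φ : ℝ → ℝ satisfies φ'(t) = −2Lφ(t) − γ(φ(t)² + 1) for every t ∈ [0,T] and φ(0) = 1/λ. Then φ(T) = λ. -/

import Mathlib

/-- If `u` has constant derivative `-c` on `[0, T]`, then `u T = u 0 - c * T`. -/
theorem aux_const_deriv {c T : ℝ} (hT : 0 ≤ T) {u : ℝ → ℝ}
    (hu : ∀ t ∈ Set.Icc (0 : ℝ) T, HasDerivAt u (-c) t) : u T = u 0 - c * T := by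
  have key := eq_of_has_deriv_right_eq (a := 0) (b := T) (f' := fun _ => -c) (f := u)
    (g := fun t => u 0 - c * t)
    (fun x hx => (hu x (Set.Ico_subset_Icc_self hx)).hasDerivWithinAt)
    (fun x _ => by
      have h : HasDerivAt (fun t => u 0 - c * t) (-c) x := by
        simpa using ((hasDerivAt_id x).const_mul c).const_sub (u 0)
      exact h.hasDerivWithinAt)
    (fun x hx => (hu x hx).continuousAt.continuousWithinAt)
    ((continuous_const.sub (continuous_const.mul continuous_id)).continuousOn)
    (by simp)
  simpa using key T (Set.right_mem_Icc.mpr hT)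


set_option maxHeartbeats 1000000 in
/-- In the case `γ > L`, with `r = √((γ/L)² - 1)` and
`T = (1/(L·r))·arctan(r(1-λ) / (2(λ/(1+λ))(γ/L - 1) + 1 + λ))`, a solution of
`φ' = -2Lφ - γ(φ² + 1)` on `[0, T]` with `φ 0 = 1/λ` satisfies `φ T = λ`. -/
theorem riccati_miet_formula_gt_case
    (L γ lam : ℝ) (hL : 0 < L) (hLγ : L < γ) (hlam : lam ∈ Set.Ioo (0 : ℝ) 1)
    (r T : ℝ)
    (hr : r = Real.sqrt ((γ / L) ^ 2 - 1))
    (hTdef : T = (1 / (L * r)) *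
      Real.arctan (r * (1 - lam) / (2 * (lam / (1 + lam)) * (γ / L - 1) + 1 + lam)))
    (φ : ℝ → ℝ)
    (hode : ∀ t ∈ Set.Icc (0 : ℝ) T,
      HasDerivAt φ (-2 * L * φ t - γ * ((φ t) ^ 2 + 1)) t)
    (hinit : φ 0 = 1 / lam) :
    φ T = lam := by
  obtain ⟨hl0, hl1⟩ := hlam
  have hγ : 0 < γ := hL.trans hLγ
  have hγL : 1 < γ / L := (one_lt_div hL).mpr hLγ
  have hrpos : 0 < r := by
    rw [hr]; apply Real.sqrt_pos.mpr; nlinarith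
  obtain ⟨c, hcdef⟩ : ∃ c, c = L * r := ⟨_, rfl⟩
  rw [show L * r = c from hcdef.symm] at hTdef
  have hc : 0 < c := hcdef ▸ mul_pos hL hrpos
  have hc2 : c ^ 2 = γ ^ 2 - L ^ 2 := by
    have hr2 : r ^ 2 = (γ / L) ^ 2 - 1 := by
      rw [hr]; exact Real.sq_sqrt (by nlinarith)
    have : c ^ 2 = L ^ 2 * r ^ 2 := by rw [hcdef]; ring
    rw [this, hr2]; field_simp
  obtain ⟨D, hDdef⟩ : ∃ D, D = 2 * (lam / (1 + lam)) * (γ / L - 1) + 1 + lam := ⟨_, rfl⟩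
  rw [show 2 * (lam / (1 + lam)) * (γ / L - 1) + 1 + lam = D from hDdef.symm] at hTdef
  have hD : 0 < D := by
    have h1 : 0 < lam / (1 + lam) := by positivity
    rw [hDdef]
    nlinarith [mul_pos h1 (sub_pos.mpr hγL)]
  obtain ⟨X, hXdef⟩ : ∃ X, X = r * (1 - lam) / D := ⟨_, rfl⟩
  rw [show r * (1 - lam) / D = X from hXdef.symm] at hTdef
  have hXpos : 0 < X := by
    rw [hXdef]; apply div_pos _ hD; nlinarith
  obtain ⟨A, hAdef⟩ : ∃ A, A = (γ * (1 / lam) + L) / c := ⟨_, rfl⟩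
  obtain ⟨B, hBdef⟩ : ∃ B, B = (γ * lam + L) / c := ⟨_, rfl⟩
  have hBpos : 0 < B := hBdef ▸ div_pos (by positivity) hc
  have hBA : B < A := by
    rw [hAdef, hBdef]
    gcongr
    have h1 : lam < 1 / lam := by
      rw [lt_div_iff₀ hl0]; nlinarith
    nlinarith
  have hApos : 0 < A := hBpos.trans hBA
  -- the key algebraic identity: X = (A - B) / (1 + A * B)
  have hE : 0 < 2 * γ * lam + L * (1 + lam ^ 2) := by positivity
  have hX1 : X = c * (1 - lam ^ 2) / (2 * γ * lam + L * (1 + lam ^ 2)) := by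
    rw [hXdef, hcdef]
    rw [div_eq_div_iff hD.ne' hE.ne', hDdef]
    field_simp
    ring
  have h1AB : 0 < 1 + A * B := by positivity
  have hXeq : X = (A - B) / (1 + A * B) := by
    rw [hX1, hAdef, hBdef]
    rw [div_eq_div_iff hE.ne' (by positivity)]
    have hcne : c ≠ 0 := hc.ne'
    have hlne : lam ≠ 0 := hl0.ne'
    field_simp
    linear_combination (lam * (1 - lam ^ 2)) * hc2
  -- arctan B + arctan X = arctan A
  have hBX1 : B * X < 1 := by
    rw [hXeq, ← mul_div_assoc, div_lt_one h1AB]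
    nlinarith
  have harc : Real.arctan B + Real.arctan X = Real.arctan A := by
    rw [Real.arctan_add hBX1]
    congr 1
    have hb2 : (0:ℝ) < 1 + B ^ 2 := by positivity
    have h1 : (1:ℝ) - B * X = (1 + B ^ 2) / (1 + A * B) := by
      rw [hXeq, ← mul_div_assoc, eq_div_iff h1AB.ne', sub_mul,
        div_mul_cancel₀ _ h1AB.ne']
      ring
    have h2 : B + X = A * (1 + B ^ 2) / (1 + A * B) := by
      rw [hXeq, eq_div_iff h1AB.ne', add_mul, div_mul_cancel₀ _ h1AB.ne']
      ring
    rw [h1, h2]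
    rw [div_div_div_cancel_right₀]
    · exact mul_div_cancel_right₀ A hb2.ne'
    · exact h1AB.ne'
  -- the transformed clock u = arctan ((γ φ + L)/c) has derivative -c
  have hT0 : 0 ≤ T := by
    rw [hTdef]
    have : 0 ≤ Real.arctan X := by simpa using (Real.arctan_strictMono hXpos).le
    positivity
  have hu : ∀ t ∈ Set.Icc (0 : ℝ) T,
      HasDerivAt (fun s => Real.arctan ((γ * φ s + L) / c)) (-c) t := by
    intro t ht
    have h1 := hode t ht
    have h2 : HasDerivAt (fun s => (γ * φ s + L) / c)
        ((γ * (-2 * L * φ t - γ * ((φ t) ^ 2 + 1))) / c) t :=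
      ((h1.const_mul γ).add_const L).div_const c
    have h4 : HasDerivAt (fun s => Real.arctan ((γ * φ s + L) / c))
        (1 / (1 + ((γ * φ t + L) / c) ^ 2) *
          ((γ * (-2 * L * φ t - γ * ((φ t) ^ 2 + 1))) / c)) t :=
      h2.arctan
    have hden : (0:ℝ) < 1 + ((γ * φ t + L) / c) ^ 2 := by positivity
    have hval : 1 / (1 + ((γ * φ t + L) / c) ^ 2) *
        ((γ * (-2 * L * φ t - γ * ((φ t) ^ 2 + 1))) / c) = -c := by
      have hS : 1 + ((γ * φ t + L) / c) ^ 2 = (c ^ 2 + (γ * φ t + L) ^ 2) / c ^ 2 := by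
        rw [div_pow, eq_div_iff (pow_ne_zero 2 hc.ne'), add_mul, one_mul,
          div_mul_cancel₀ _ (pow_ne_zero 2 hc.ne')]
      have hpos : (0:ℝ) < c ^ 2 + (γ * φ t + L) ^ 2 := by positivity
      rw [hS, one_div_div, div_mul_div_comm, div_eq_iff (by positivity)]
      linear_combination (c ^ 2) * hc2
    rwa [hval] at h4
  -- hence u T = u 0 - c * T
  have huT : Real.arctan ((γ * φ T + L) / c)
      = Real.arctan ((γ * φ 0 + L) / c) - c * T := aux_const_deriv hT0 hu
  have hcT : c * T = Real.arctan X := by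
    rw [hTdef, ← mul_assoc, mul_one_div, div_self hc.ne', one_mul]
  have hu0 : Real.arctan ((γ * φ 0 + L) / c) = Real.arctan A := by
    rw [hinit, hAdef]
  have huTval : Real.arctan ((γ * φ T + L) / c) = Real.arctan B := by
    rw [huT, hu0, hcT, ← harc]; ring
  have : (γ * φ T + L) / c = B := Real.arctan_injective huTval
  rw [hBdef, div_eq_div_iff hc.ne' hc.ne'] at this
  have hγφ : γ * φ T = γ * lam := by nlinarith
  exact mul_left_cancel₀ hγ.ne' hγφ
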